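/- Relation between discrete-time L-IEKF and R-IEKF state matrices (Appendix, equation A_R = Ad_{x̂⁻} ∘ A_L ∘ Ad_{x̂}⁻¹). Let Γ : Matrix n n ℝ → Matrix n n ℝ, let x̂ ∈ Matrix n n ℝ be invertible, suppose Γ has Fréchet derivative D at x̂, and suppose Γ(x̂) is invertible. Set x̂⁻ := x̂ * Γ(x̂) (the predicted reference, which is invertible). Define linear maps on Matrix n n ℝ by A_L(ε) := Γ(x̂)⁻¹ * ε * Γ(x̂) + Γ(x̂)⁻¹ * D(x̂ * ε) and A_R(ε) := ε + x̂ * D(ε * x̂) * Γ(x̂)⁻¹ * x̂⁻¹. Then for every ε ∈ Matrix n n ℝ: A_R(ε) = x̂⁻ * A_L(x̂⁻¹ * ε * x̂) * (x̂⁻)⁻¹. -/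
import Mathlib


open Matrix

attribute [local instance] Matrix.normedAddCommGroup Matrix.normedSpace

/-- **Relation between discrete-time L-IEKF and R-IEKF state matrices**
(Appendix): `A_R = Ad_{x̂⁻} ∘ A_L ∘ Ad_{x̂}⁻¹`, where `x̂⁻ = x̂ Γ(x̂)`,
`A_L ε = Γ(x̂)⁻¹ ε Γ(x̂) + Γ(x̂)⁻¹ D(x̂ ε)` and
`A_R ε = ε + x̂ D(ε x̂) Γ(x̂)⁻¹ x̂⁻¹`, with `D` the Fréchet derivative of `Γ`
at `x̂`. -/
theorem discrete_left_right_state_matrix_relation {n : ℕ}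
    (Gam : Matrix (Fin n) (Fin n) ℝ → Matrix (Fin n) (Fin n) ℝ)
    (xhat : Matrix (Fin n) (Fin n) ℝ) (hx : IsUnit xhat)
    (D : Matrix (Fin n) (Fin n) ℝ →L[ℝ] Matrix (Fin n) (Fin n) ℝ)
    (hD : HasFDerivAt Gam D xhat)
    (hG : IsUnit (Gam xhat))
    (xhatMinus : Matrix (Fin n) (Fin n) ℝ)
    (hxm : xhatMinus = xhat * Gam xhat)
    (AL AR : Matrix (Fin n) (Fin n) ℝ →ₗ[ℝ] Matrix (Fin n) (Fin n) ℝ)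
    (hAL : ∀ ε, AL ε = (Gam xhat)⁻¹ * ε * Gam xhat + (Gam xhat)⁻¹ * D (xhat * ε))
    (hAR : ∀ ε, AR ε = ε + xhat * D (ε * xhat) * (Gam xhat)⁻¹ * xhat⁻¹) :
    ∀ ε, AR ε = xhatMinus * AL (xhat⁻¹ * ε * xhat) * xhatMinus⁻¹ := by
  have hxd : IsUnit xhat.det := (Matrix.isUnit_iff_isUnit_det xhat).mp hx
  have hGd : IsUnit (Gam xhat).det := (Matrix.isUnit_iff_isUnit_det _).mp hG
  have hx1 : ∀ b, xhat * (xhat⁻¹ * b) = b := fun b => by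
    rw [← mul_assoc, Matrix.mul_nonsing_inv xhat hxd, one_mul]
  have hx2 : ∀ b, xhat⁻¹ * (xhat * b) = b := fun b => by
    rw [← mul_assoc, Matrix.nonsing_inv_mul xhat hxd, one_mul]
  have hG1 : ∀ b, Gam xhat * ((Gam xhat)⁻¹ * b) = b := fun b => by
    rw [← mul_assoc, Matrix.mul_nonsing_inv _ hGd, one_mul]
  have hG2 : ∀ b, (Gam xhat)⁻¹ * (Gam xhat * b) = b := fun b => by
    rw [← mul_assoc, Matrix.nonsing_inv_mul _ hGd, one_mul]
  intro ε
  rw [hAR, hxm, hAL, Matrix.mul_inv_rev]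
  simp only [mul_add, add_mul, mul_assoc, hx1, hx2, hG1, hG2]
  rw [Matrix.mul_nonsing_inv xhat hxd]
  simp
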